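/- arXiv:1806.03430 — 2 statements merged into one kernel-verified Lean document; each statement's English description precedes it below -/
import Mathlib

section
/- For any matrix L ∈ ℝ^{m×n} with rank(L) ≤ r, the nuclear norm admits the variational characterization ‖L‖_* = inf{(1/2)‖U‖_F² + (1/2)‖V‖_F² : U ∈ ℝ^{m×r}, V ∈ ℝ^{n×r}, UV^⊤ = L}, and the infimum is attained. -/
open Matrix Finset


/-- The nuclear norm of a real matrix: the sum of its singular values, i.e. the sum of the
square roots of the eigenvalues of `Aᴴ * A`. -/
noncomputable def nuclearNorm {m n : ℕ} (A : Matrix (Fin m) (Fin n) ℝ) : ℝ :=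
  ∑ i, Real.sqrt ((Matrix.isHermitian_conjTranspose_mul_self A).eigenvalues i)

noncomputable def frobSq {m n : ℕ} (A : Matrix (Fin m) (Fin n) ℝ) : ℝ := ∑ i, ∑ j, (A i j)^2


lemma mulVec_dotProduct_right {m n : ℕ} (M : Matrix (Fin m) (Fin n) ℝ) (x : Fin n → ℝ)
    (y : Fin m → ℝ) : (M *ᵥ x) ⬝ᵥ y = x ⬝ᵥ (Mᵀ *ᵥ y) := by
  rw [mulVec_transpose, dotProduct_comm, dotProduct_mulVec, dotProduct_comm]

lemma frobSq_eq_trace {m n : ℕ} (M : Matrix (Fin m) (Fin n) ℝ) :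
    frobSq M = (Mᵀ * M).trace := by
  simp [frobSq, Matrix.trace, Matrix.diag, Matrix.mul_apply, sq]
  exact Finset.sum_comm

lemma frobSq_nonneg {m n : ℕ} (M : Matrix (Fin m) (Fin n) ℝ) : 0 ≤ frobSq M := by
  apply Finset.sum_nonneg; intro i _; apply Finset.sum_nonneg; intro j _; positivity

lemma bessel_matrix {k n r : ℕ} (W : Matrix (Fin k) (Fin r) ℝ) (C : Matrix (Fin k) (Fin n) ℝ)
    (hC : C * (Cᵀ * C) = C) : frobSq (Wᵀ * C) ≤ frobSq W := by
  set P : Matrix (Fin k) (Fin k) ℝ := C * Cᵀ with hPdef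
  have hP : P * P = P := by
    calc P * P = (C * (Cᵀ * C)) * Cᵀ := by simp only [hPdef, Matrix.mul_assoc]
    _ = P := by rw [hC]
  have hPt : Pᵀ = P := by simp [hPdef, transpose_mul]
  have hQ : (1 - P) * (1 - P) = 1 - P := by
    rw [sub_mul, one_mul, mul_sub, mul_one, hP]; abel
  have hQt : (1 - P)ᵀ = 1 - P := by rw [transpose_sub, transpose_one, hPt]
  have key : frobSq W - frobSq (Wᵀ * C) = frobSq ((1 - P) * W) := by
    rw [frobSq_eq_trace, frobSq_eq_trace, frobSq_eq_trace]
    have h2 : ((Wᵀ * C)ᵀ * (Wᵀ * C)).trace = (Wᵀ * (P * W)).trace := by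
      rw [transpose_mul, transpose_transpose]
      rw [Matrix.trace_mul_comm (Cᵀ * W) (Wᵀ * C)]
      congr 1
      simp only [hPdef, Matrix.mul_assoc]
    have h3 : ((1 - P) * W)ᵀ * ((1 - P) * W) = Wᵀ * W - Wᵀ * (P * W) := by
      rw [transpose_mul, hQt, Matrix.mul_assoc, ← Matrix.mul_assoc (1 - P), hQ]
      rw [Matrix.sub_mul, Matrix.one_mul, Matrix.mul_sub]
    rw [h2, h3, Matrix.trace_sub]
  linarith [frobSq_nonneg ((1 - P) * W)]

noncomputable def evmu {m n : ℕ} (L : Matrix (Fin m) (Fin n) ℝ) : Fin n → ℝ :=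
  (Matrix.isHermitian_conjTranspose_mul_self L).eigenvalues

noncomputable def evb {m n : ℕ} (L : Matrix (Fin m) (Fin n) ℝ) (i : Fin n) : Fin n → ℝ :=
  (WithLp.equiv 2 (Fin n → ℝ)) ((Matrix.isHermitian_conjTranspose_mul_self L).eigenvectorBasis i)

variable {m n : ℕ} (L : Matrix (Fin m) (Fin n) ℝ)

lemma mu_nonneg (i : Fin n) : 0 ≤ evmu L i :=
  (Matrix.posSemidef_conjTranspose_mul_self L).eigenvalues_nonneg i

lemma dot_b (i j : Fin n) : evb L i ⬝ᵥ evb L j = if i = j then 1 else 0 := by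
  have h := orthonormal_iff_ite.mp
    ((Matrix.isHermitian_conjTranspose_mul_self L).eigenvectorBasis).orthonormal i j
  rw [dotProduct_comm]
  simpa [evb, PiLp.inner_apply, dotProduct] using h

lemma dot_eigen (i j : Fin n) :
    (L *ᵥ evb L i) ⬝ᵥ (L *ᵥ evb L j) = if i = j then evmu L i else 0 := by
  rw [mulVec_dotProduct_right, mulVec_mulVec,
    ← Matrix.conjTranspose_eq_transpose_of_trivial]
  rw [show (Lᴴ * L) *ᵥ evb L j = evmu L j • evb L j from
    (Matrix.isHermitian_conjTranspose_mul_self L).mulVec_eigenvectorBasis j]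
  rw [dotProduct_smul, dot_b]
  by_cases h : i = j <;> simp [h, evmu]

/-- Matrix of eigenvectors as columns. -/
noncomputable def evB {m n : ℕ} (L : Matrix (Fin m) (Fin n) ℝ) : Matrix (Fin n) (Fin n) ℝ :=
  fun x i => evb L i x

lemma evB_mul_transpose : evB L * (evB L)ᵀ = 1 := by
  have h := Matrix.mem_unitaryGroup_iff.mp
    ((Matrix.isHermitian_conjTranspose_mul_self L).eigenvectorUnitary).2
  have he : evB L = ((Matrix.isHermitian_conjTranspose_mul_self L).eigenvectorUnitary :
      Matrix (Fin n) (Fin n) ℝ) := by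
    ext x i
    rw [Matrix.IsHermitian.eigenvectorUnitary_apply]
    rfl
  rw [he]
  have ht : (((Matrix.isHermitian_conjTranspose_mul_self L).eigenvectorUnitary :
      Matrix (Fin n) (Fin n) ℝ))ᵀ = star (((Matrix.isHermitian_conjTranspose_mul_self L).eigenvectorUnitary :
      Matrix (Fin n) (Fin n) ℝ)) := by
    ext x y
    simp [Matrix.conjTranspose_apply]
  rw [ht]
  exact h

lemma transpose_mul_evB : (evB L)ᵀ * evB L = 1 := by
  ext i j
  simp only [Matrix.mul_apply, Matrix.transpose_apply]
  have := dot_b L i j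
  simpa [dotProduct, evB, Matrix.one_apply] using this

lemma Lb_eq_zero {i : Fin n} (h : evmu L i = 0) : L *ᵥ evb L i = 0 := by
  have hd := dot_eigen L i i
  rw [if_pos rfl, h] at hd
  funext x
  have hsum : ∑ y, (L *ᵥ evb L i) y ^ 2 = 0 := by
    simpa [dotProduct, sq] using hd
  have := (Finset.sum_eq_zero_iff_of_nonneg (fun y _ => sq_nonneg _)).mp hsum x (Finset.mem_univ x)
  simpa using pow_eq_zero_iff (n := 2) (by norm_num) |>.mp this

lemma sum_dite_embedding {α : Type*} [Fintype α] [DecidableEq α] {r : ℕ} (ι : α ↪ Fin r) (G : α → ℝ) :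
    ∑ j : Fin r, (if h : ∃ i, ι i = j then G h.choose else 0) = ∑ i, G i := by
  have key : ∀ j : Fin r, (if h : ∃ i, ι i = j then G h.choose else 0)
      = ∑ i, if ι i = j then G i else 0 := by
    intro j
    by_cases hj : ∃ i, ι i = j
    · obtain ⟨i₀, hi₀⟩ := hj
      subst hi₀
      rw [dif_pos ⟨i₀, rfl⟩]
      have hc : (⟨i₀, rfl⟩ : ∃ i, ι i = ι i₀).choose = i₀ :=
        ι.injective (⟨i₀, rfl⟩ : ∃ i, ι i = ι i₀).choose_spec
      rw [hc]
      have key2 : ∀ i, (if ι i = ι i₀ then G i else 0) = if i = i₀ then G i else 0 := by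
        intro i
        by_cases h : i = i₀
        · subst h; simp
        · rw [if_neg h, if_neg (fun hc2 => h (ι.injective hc2))]
      rw [Finset.sum_congr rfl (fun i _ => key2 i), Finset.sum_ite_eq' Finset.univ i₀ G]
      simp
    · rw [dif_neg hj]
      symm
      apply Finset.sum_eq_zero
      intro i _
      exact if_neg (fun hcon => hj ⟨i, hcon⟩)
  simp_rw [key]
  rw [Finset.sum_comm]
  apply Finset.sum_congr rfl
  intro i _
  simp

lemma frobSq_swap {m n : ℕ} (M : Matrix (Fin m) (Fin n) ℝ) :
    frobSq M = ∑ j, ∑ i, (M i j)^2 := Finset.sum_comm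

lemma mu_pos {i : Fin n} (h : evmu L i ≠ 0) : 0 < evmu L i :=
  lt_of_le_of_ne (mu_nonneg L i) (Ne.symm h)

lemma sqrt_mu_pos {i : Fin n} (h : evmu L i ≠ 0) : 0 < Real.sqrt (evmu L i) :=
  Real.sqrt_pos.mpr (mu_pos L h)

lemma b_self_dot (i : Fin n) : evb L i ⬝ᵥ evb L i = 1 := by
  rw [dot_b, if_pos rfl]

lemma part1 {r : ℕ} (hr : L.rank ≤ r) :
    ∃ (U : Matrix (Fin m) (Fin r) ℝ) (V : Matrix (Fin n) (Fin r) ℝ),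
      U * V.transpose = L ∧ nuclearNorm L = (1/2) * frobSq U + (1/2) * frobSq V := by
  classical
  have hcard : Fintype.card {i : Fin n // evmu L i ≠ 0} ≤ Fintype.card (Fin r) := by
    have h1 : (Lᴴ * L).rank = Fintype.card {i : Fin n // evmu L i ≠ 0} :=
      (Matrix.isHermitian_conjTranspose_mul_self L).rank_eq_card_non_zero_eigs
    have hT : Lᴴ = Lᵀ := by ext x y; simp [Matrix.conjTranspose_apply]
    rw [hT, Matrix.rank_transpose_mul_self] at h1
    rw [Fintype.card_fin]
    omega
  obtain ⟨ι⟩ := Function.Embedding.nonempty_of_card_le hcard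
  set s : {i : Fin n // evmu L i ≠ 0} → ℝ :=
    fun i => Real.sqrt (Real.sqrt (evmu L i.1)) with hs
  have hspos : ∀ i, 0 < s i := fun i => Real.sqrt_pos.mpr (sqrt_mu_pos L i.2)
  have hssq : ∀ i, s i ^ 2 = Real.sqrt (evmu L i.1) := fun i =>
    Real.sq_sqrt (Real.sqrt_nonneg _)
  refine ⟨fun x j => if h : ∃ i, ι i = j then (s h.choose)⁻¹ * (L *ᵥ evb L h.choose.1) x else 0,
    fun y j => if h : ∃ i, ι i = j then s h.choose * evb L h.choose.1 y else 0, ?_, ?_⟩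
  · ext x y
    erw [Matrix.mul_apply]
    beta_reduce
    have hterm : ∀ j, (if h : ∃ i, ι i = j then (s h.choose)⁻¹ * (L *ᵥ evb L h.choose.1) x else 0)
        * (Matrix.transpose (fun y j => if h : ∃ i, ι i = j then s h.choose * evb L h.choose.1 y else 0) j y)
        = if h : ∃ i, ι i = j then (L *ᵥ evb L h.choose.1) x * evb L h.choose.1 y else 0 := by
      intro j
      erw [Matrix.transpose_apply]
      beta_reduce
      by_cases h : ∃ i, ι i = j
      · rw [dif_pos h, dif_pos h, dif_pos h]
        have := (hspos h.choose).ne'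
        field_simp
      · rw [dif_neg h, dif_neg h, dif_neg h, mul_zero]
    rw [Finset.sum_congr rfl (fun j _ => hterm j)]
    rw [sum_dite_embedding ι (fun i => (L *ᵥ evb L i.1) x * evb L i.1 y)]
    rw [Finset.sum_subtype (Finset.univ.filter (fun i => evmu L i ≠ 0))
      (by intro i; simp) (fun i => (L *ᵥ evb L i) x * evb L i y) |>.symm]
    rw [Finset.sum_filter_of_ne (by
      intro i _ hne hzero
      rw [Lb_eq_zero L hzero] at hne
      simp at hne)]
    have hstep : ∀ i, (L *ᵥ evb L i) x * evb L i y = (L * evB L) x i * (evB L)ᵀ i y := by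
      intro i
      simp [Matrix.mul_apply, Matrix.mulVec, dotProduct, evB]
    rw [Finset.sum_congr rfl (fun i _ => hstep i), ← Matrix.mul_apply, Matrix.mul_assoc,
      evB_mul_transpose, Matrix.mul_one]
  · have hU : frobSq (fun x j => if h : ∃ i, ι i = j then (s h.choose)⁻¹ * (L *ᵥ evb L h.choose.1) x else 0)
        = ∑ i : {i : Fin n // evmu L i ≠ 0}, Real.sqrt (evmu L i.1) := by
      erw [frobSq_swap]
      beta_reduce
      have hcol : ∀ j, (∑ x, ((if h : ∃ i, ι i = j then (s h.choose)⁻¹ * (L *ᵥ evb L h.choose.1) x else 0))^2)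
          = if h : ∃ i, ι i = j then Real.sqrt (evmu L h.choose.1) else 0 := by
        intro j
        by_cases h : ∃ i, ι i = j
        · simp only [dif_pos h]
          have hdot : ∑ x, ((L *ᵥ evb L h.choose.1) x)^2 = evmu L h.choose.1 := by
            have := dot_eigen L h.choose.1 h.choose.1
            rw [if_pos rfl] at this
            rw [← this]
            simp [dotProduct, sq]
          have hexp : ∀ x, ((s h.choose)⁻¹ * (L *ᵥ evb L h.choose.1) x)^2
              = (s h.choose)⁻¹^2 * ((L *ᵥ evb L h.choose.1) x)^2 := fun x => by ring
          rw [Finset.sum_congr rfl (fun x _ => hexp x), ← Finset.mul_sum, hdot]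
          have h1 : (s h.choose)⁻¹^2 = (Real.sqrt (evmu L h.choose.1))⁻¹ := by
            rw [← hssq h.choose]; rw [inv_pow]
          rw [h1]
          field_simp
          exact Real.div_sqrt
        · simp only [dif_neg h]
          simp
      rw [Finset.sum_congr rfl (fun j _ => hcol j),
        sum_dite_embedding ι (fun i => Real.sqrt (evmu L i.1))]
    have hV : frobSq (fun y j => if h : ∃ i, ι i = j then s h.choose * evb L h.choose.1 y else 0)
        = ∑ i : {i : Fin n // evmu L i ≠ 0}, Real.sqrt (evmu L i.1) := by
      erw [frobSq_swap]
      beta_reduce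
      have hcol : ∀ j, (∑ y, ((if h : ∃ i, ι i = j then s h.choose * evb L h.choose.1 y else 0))^2)
          = if h : ∃ i, ι i = j then Real.sqrt (evmu L h.choose.1) else 0 := by
        intro j
        by_cases h : ∃ i, ι i = j
        · simp only [dif_pos h]
          have hdot : ∑ y, (evb L h.choose.1 y)^2 = 1 := by
            have := b_self_dot L h.choose.1
            rw [← this]
            simp [dotProduct, sq]
          have hexp : ∀ y, (s h.choose * evb L h.choose.1 y)^2
              = s h.choose^2 * (evb L h.choose.1 y)^2 := fun y => by ring
          rw [Finset.sum_congr rfl (fun y _ => hexp y), ← Finset.mul_sum, hdot, mul_one,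
            hssq h.choose]
        · simp only [dif_neg h]
          simp
      rw [Finset.sum_congr rfl (fun j _ => hcol j),
        sum_dite_embedding ι (fun i => Real.sqrt (evmu L i.1))]
    rw [hU, hV]
    have hnn : nuclearNorm L = ∑ i : Fin n, Real.sqrt (evmu L i) := rfl
    have hsub : ∑ i : Fin n, Real.sqrt (evmu L i)
        = ∑ i : {i : Fin n // evmu L i ≠ 0}, Real.sqrt (evmu L i.1) := by
      rw [← Finset.sum_subtype (Finset.univ.filter (fun i => evmu L i ≠ 0))
        (by intro i; simp) (fun i => Real.sqrt (evmu L i))]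
      symm
      apply Finset.sum_filter_of_ne
      intro i _ hne h0
      exact hne (by rw [h0, Real.sqrt_zero])
    rw [hnn, hsub]
    ring

lemma dot_le_half (p q : Fin n → ℝ) : p ⬝ᵥ q ≤ (1/2) * (p ⬝ᵥ p) + (1/2) * (q ⬝ᵥ q) := by
  simp only [dotProduct]
  rw [Finset.mul_sum, Finset.mul_sum, ← Finset.sum_add_distrib]
  apply Finset.sum_le_sum
  intro x _
  nlinarith [sq_nonneg (p x - q x)]

lemma part2 {r : ℕ} (U : Matrix (Fin m) (Fin r) ℝ) (V : Matrix (Fin n) (Fin r) ℝ)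
    (hUV : U * V.transpose = L) :
    nuclearNorm L ≤ (1/2) * frobSq U + (1/2) * frobSq V := by
  classical
  set σ : Fin n → ℝ := fun i => Real.sqrt (evmu L i) with hσ
  set a : Fin n → Fin m → ℝ :=
    fun i x => if evmu L i = 0 then 0 else (σ i)⁻¹ * (L *ᵥ evb L i) x with ha
  set C : Matrix (Fin m) (Fin n) ℝ := fun x i => a i x with hC
  have ha0 : ∀ i, evmu L i = 0 → a i = 0 := by
    intro i h; funext x; simp [ha, h]
  have hasmul : ∀ i, evmu L i ≠ 0 → a i = (σ i)⁻¹ • (L *ᵥ evb L i) := by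
    intro i h; funext x; simp [ha, h]
  have haa : ∀ i j, a i ⬝ᵥ a j = if i = j ∧ evmu L i ≠ 0 then 1 else 0 := by
    intro i j
    by_cases hi : evmu L i = 0
    · rw [ha0 i hi, zero_dotProduct, if_neg (by tauto)]
    · by_cases hj : evmu L j = 0
      · rw [ha0 j hj, dotProduct_zero, if_neg (by rintro ⟨rfl, h⟩; exact h hj)]
      · rw [hasmul i hi, hasmul j hj, smul_dotProduct, dotProduct_smul, dot_eigen]
        by_cases hij : i = j
        · subst hij
          rw [if_pos rfl, if_pos ⟨rfl, hi⟩]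
          have h1 : σ i * σ i = evmu L i := Real.mul_self_sqrt (mu_nonneg L i)
          have h2 : σ i ≠ 0 := (sqrt_mu_pos L hi).ne'
          simp only [smul_eq_mul]
          field_simp
          linarith [h1]
        · rw [if_neg hij, if_neg (by tauto)]
          simp
  have hCtC : Cᵀ * C = Matrix.diagonal (fun i => if evmu L i = 0 then 0 else 1) := by
    ext i j
    rw [Matrix.mul_apply]
    have : ∑ x, Cᵀ i x * C x j = a i ⬝ᵥ a j := by
      simp [dotProduct, hC, Matrix.transpose_apply]
      rfl
    rw [this, haa i j, Matrix.diagonal_apply]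
    by_cases hij : i = j
    · subst hij
      by_cases hi : evmu L i = 0 <;> simp [hi]
    · rw [if_neg hij, if_neg (by tauto)]
  have hCC : C * (Cᵀ * C) = C := by
    rw [hCtC]
    ext x i
    rw [Matrix.mul_diagonal]
    by_cases hi : evmu L i = 0
    · simp [hi, hC, ha]
    · simp [hi]
  have hBB : evB L * ((evB L)ᵀ * evB L) = evB L := by
    rw [transpose_mul_evB, Matrix.mul_one]
  have key1 : ∀ i, σ i = (Uᵀ *ᵥ a i) ⬝ᵥ (Vᵀ *ᵥ evb L i) := by
    intro i
    by_cases hi : evmu L i = 0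
    · rw [ha0 i hi, Matrix.mulVec_zero, zero_dotProduct, hσ]
      simp [hi]
    · rw [mulVec_dotProduct_right, Matrix.transpose_transpose, Matrix.mulVec_mulVec, hUV,
        hasmul i hi, smul_dotProduct]
      have hd := dot_eigen L i i
      rw [if_pos rfl] at hd
      rw [hd]
      have h1 : σ i * σ i = evmu L i := Real.mul_self_sqrt (mu_nonneg L i)
      have h2 : σ i ≠ 0 := (sqrt_mu_pos L hi).ne'
      simp only [smul_eq_mul]
      field_simp
      linarith [h1]
  have hsum1 : ∑ i, (Uᵀ *ᵥ a i) ⬝ᵥ (Uᵀ *ᵥ a i) = frobSq (Uᵀ * C) := by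
    rw [frobSq_swap]
    apply Finset.sum_congr rfl
    intro i _
    simp [dotProduct, Matrix.mul_apply, Matrix.mulVec, dotProduct, hC, sq,
      Matrix.transpose_apply]
    rfl
  have hsum2 : ∑ i, (Vᵀ *ᵥ evb L i) ⬝ᵥ (Vᵀ *ᵥ evb L i) = frobSq (Vᵀ * evB L) := by
    rw [frobSq_swap]
    apply Finset.sum_congr rfl
    intro i _
    simp [dotProduct, Matrix.mul_apply, Matrix.mulVec, dotProduct, evB, sq,
      Matrix.transpose_apply]
  have hb1 := bessel_matrix U C hCC
  have hb2 := bessel_matrix V (evB L) hBB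
  have hnn : nuclearNorm L = ∑ i, σ i := rfl
  calc nuclearNorm L = ∑ i, (Uᵀ *ᵥ a i) ⬝ᵥ (Vᵀ *ᵥ evb L i) := by
        rw [hnn]; exact Finset.sum_congr rfl (fun i _ => key1 i)
    _ ≤ ∑ i, ((1/2) * ((Uᵀ *ᵥ a i) ⬝ᵥ (Uᵀ *ᵥ a i)) + (1/2) * ((Vᵀ *ᵥ evb L i) ⬝ᵥ (Vᵀ *ᵥ evb L i))) :=
        Finset.sum_le_sum (fun i _ => dot_le_half _ _)
    _ = (1/2) * frobSq (Uᵀ * C) + (1/2) * frobSq (Vᵀ * evB L) := by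
        rw [Finset.sum_add_distrib, ← Finset.mul_sum, ← Finset.mul_sum, hsum1, hsum2]
    _ ≤ (1/2) * frobSq U + (1/2) * frobSq V := by linarith


/-- for `rank L ≤ r`, `‖L‖_* = min{(1/2)‖U‖_F² + (1/2)‖V‖_F² : UVᵀ = L}`,
and the infimum is attained. -/
theorem nuclearNorm_factorization {m n r : ℕ} (L : Matrix (Fin m) (Fin n) ℝ)
    (hr : L.rank ≤ r) :
    IsLeast {c : ℝ | ∃ (U : Matrix (Fin m) (Fin r) ℝ) (V : Matrix (Fin n) (Fin r) ℝ),
        U * V.transpose = L ∧ c = (1/2) * frobSq U + (1/2) * frobSq V}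
      (nuclearNorm L) := by
  constructor
  · obtain ⟨U, V, hUV, heq⟩ := part1 L hr
    exact ⟨U, V, hUV, heq⟩
  · rintro c ⟨U, V, hUV, rfl⟩
    exact part2 L U V hUV
end

section
/- Sublinear rate of the proximal gradient method: let F(x) = f(x) + g(x) where f : ℝⁿ → ℝ is convex and differentiable with L-Lipschitz gradient and g : ℝⁿ → ℝ ∪ {∞} is proper closed convex, and suppose a minimizer x* of F exists. Then the iterates x^{k+1} = argmin_x g(x) + (L/2)‖x − (x^k − (1/L)∇f(x^k))‖² satisfy F(x^k) − F(x*) ≤ L‖x⁰ − x*‖²/(2k) for all k ≥ 1. -/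
open InnerProductSpace Set Filter Topology
variable {E : Type*} [NormedAddCommGroup E] [InnerProductSpace ℝ E] [CompleteSpace E]
local notation "⟪" x ", " y "⟫" => @inner ℝ _ _ x y

lemma aux_hasDerivAt {f : E → ℝ} {f' : E → E} (hf : ∀ p, HasGradientAt f (f' p) p)
    (a d : E) (t : ℝ) :
    HasDerivAt (fun s : ℝ => f (a + s • d)) ⟪f' (a + t • d), d⟫ t := by
  have h1 : HasDerivAt (fun s : ℝ => a + s • d) d t := by
    simpa using ((hasDerivAt_id t).smul_const d).const_add a
  have h2 := (hasGradientAt_iff_hasFDerivAt.1 (hf (a + t • d))).comp_hasDerivAt t h1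
  simp at h2
  exact h2


lemma aux_convex_grad {f : E → ℝ} {f' : E → E} (hconv : ConvexOn ℝ Set.univ f)
    (hf : ∀ p, HasGradientAt f (f' p) p) (a b : E) :
    f a + ⟪f' a, b - a⟫ ≤ f b := by
  set d := b - a with hd
  have hder : HasDerivAt (fun s : ℝ => f (a + s • d)) ⟪f' a, d⟫ 0 := by
    simpa using aux_hasDerivAt hf a d 0
  have hslope : Tendsto (slope (fun s : ℝ => f (a + s • d)) 0) (𝓝[>] 0) (𝓝 ⟪f' a, d⟫) :=
    (hasDerivAt_iff_tendsto_slope.1 hder).mono_left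
      (nhdsWithin_mono _ (fun t ht => ne_of_gt ht))
  have hbound : ∀ᶠ t in 𝓝[>] (0:ℝ), slope (fun s : ℝ => f (a + s • d)) 0 t ≤ f b - f a := by
    filter_upwards [Ioo_mem_nhdsGT_of_mem (by norm_num : (0:ℝ) ∈ Ico (0:ℝ) 1)] with t ht
    have ht0 : 0 < t := ht.1
    have hz : a + t • d = (1 - t) • a + t • b := by rw [hd]; module
    have hcv := hconv.2 (mem_univ a) (mem_univ b) (by linarith [ht.2] : (0:ℝ) ≤ 1 - t)
      (le_of_lt ht0) (by ring)
    simp only [smul_eq_mul] at hcv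
    rw [slope_def_field, hz]
    rw [sub_zero, div_le_iff₀ ht0]
    have : f ((1-t) • a + t • b) ≤ (1-t) * f a + t * f b := hcv
    have h0 : f (a + (0:ℝ) • d) = f a := by simp
    rw [h0]
    nlinarith
  have := le_of_tendsto hslope hbound
  linarith [this]

lemma aux_descent {L : ℝ} (hL : 0 < L) {f : E → ℝ} {f' : E → E}
    (hf : ∀ p, HasGradientAt f (f' p) p)
    (hlip : ∀ x y, ‖f' x - f' y‖ ≤ L * ‖x - y‖) (a b : E) :
    f b ≤ f a + ⟪f' a, b - a⟫ + L / 2 * ‖b - a‖ ^ 2 := by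
  set d := b - a with hd
  set ψ : ℝ → ℝ := fun t => f (a + t • d) - t * ⟪f' a, d⟫ - L / 2 * t ^ 2 * ‖d‖ ^ 2 with hψ
  have hder : ∀ t : ℝ, HasDerivAt ψ
      (⟪f' (a + t • d), d⟫ - ⟪f' a, d⟫ - L * t * ‖d‖ ^ 2) t := by
    intro t
    have h1 := aux_hasDerivAt hf a d t
    have h2 : HasDerivAt (fun s : ℝ => s * ⟪f' a, d⟫) ⟪f' a, d⟫ t := by
      simpa using (hasDerivAt_id t).mul_const ⟪f' a, d⟫
    have h3 : HasDerivAt (fun s : ℝ => L / 2 * s ^ 2 * ‖d‖ ^ 2) (L * t * ‖d‖ ^ 2) t := by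
      have := ((hasDerivAt_pow 2 t).const_mul (L/2)).mul_const (‖d‖ ^ 2)
      refine this.congr_deriv ?_
      ring
    exact (h1.sub h2).sub h3
  have hanti : AntitoneOn ψ (Icc (0:ℝ) 1) := by
    apply antitoneOn_of_deriv_nonpos (convex_Icc 0 1)
    · exact fun t _ => ((hder t).differentiableAt).continuousAt.continuousWithinAt
    · exact fun t _ => ((hder t).differentiableAt).differentiableWithinAt
    · intro t ht
      rw [interior_Icc] at ht
      rw [(hder t).deriv]
      have h1 : ⟪f' (a + t • d) - f' a, d⟫ ≤ ‖f' (a + t • d) - f' a‖ * ‖d‖ :=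
        real_inner_le_norm _ _
      have h2 : ‖f' (a + t • d) - f' a‖ ≤ L * (t * ‖d‖) := by
        have := hlip (a + t • d) a
        simpa [norm_smul, abs_of_pos ht.1] using this
      have h3 : ⟪f' (a + t • d), d⟫ - ⟪f' a, d⟫ = ⟪f' (a + t • d) - f' a, d⟫ := by
        rw [inner_sub_left]
      rw [h3]
      nlinarith [norm_nonneg d, norm_nonneg (f' (a + t • d) - f' a), ht.1.le]
  have h01 := hanti (left_mem_Icc.2 zero_le_one) (right_mem_Icc.2 zero_le_one) zero_le_one
  simp only [hψ] at h01
  have e1 : a + (1:ℝ) • d = b := by rw [hd]; module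
  have e0 : a + (0:ℝ) • d = a := by simp
  rw [e1, e0] at h01
  simp at h01
  linarith

lemma aux_quad (a b v : E) (t : ℝ) :
    ‖(1 - t) • a + t • b - v‖ ^ 2
      = (1 - t) * ‖a - v‖ ^ 2 + t * ‖b - v‖ ^ 2 - t * (1 - t) * ‖a - b‖ ^ 2 := by
  have h : (1 - t) • a + t • b - v = (1 - t) • (a - v) + t • (b - v) := by module
  have h2 : a - b = (a - v) - (b - v) := by abel
  have eL : ‖(1-t) • (a-v) + t • (b-v)‖ ^ 2
      = (1-t)^2 * ‖a-v‖^2 + 2 * ((1-t) * (t * ⟪a-v, b-v⟫)) + t^2 * ‖b-v‖^2 := by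
    rw [norm_add_sq_real, real_inner_smul_left, real_inner_smul_right, norm_smul, norm_smul,
      mul_pow, mul_pow, Real.norm_eq_abs, Real.norm_eq_abs, sq_abs, sq_abs]
  have eR : ‖(a-v) - (b-v)‖ ^ 2 = ‖a-v‖^2 - 2 * ⟪a-v, b-v⟫ + ‖b-v‖^2 := norm_sub_sq_real _ _
  rw [h, h2, eL, eR]
  ring

lemma aux_expand (z c w : E) {L : ℝ} (hL : L ≠ 0) :
    ‖z - (c - (1/L) • w)‖ ^ 2
      = ‖z - c‖ ^ 2 + (2/L) * ⟪w, z - c⟫ + (1/L) ^ 2 * ‖w‖ ^ 2 := by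
  have h : z - (c - (1/L) • w) = (z - c) + (1/L) • w := by module
  rw [h, norm_add_sq_real, real_inner_smul_right, norm_smul, mul_pow, Real.norm_eq_abs, sq_abs,
    real_inner_comm]
  ring



/-- sublinear `O(1/k)` rate of the proximal gradient method for
`F = f + g` with `f` convex with `L`-Lipschitz gradient and `g` proper closed convex
(extended-real-valued), given a minimizer `x*`:
`F(x^k) − F(x*) ≤ L‖x⁰ − x*‖²/(2k)` for all `k ≥ 1`. -/
theorem proximal_gradient_sublinear_rate {n : ℕ} (L : ℝ) (hL : 0 < L)
    (f : EuclideanSpace ℝ (Fin n) → ℝ) (f' : EuclideanSpace ℝ (Fin n) → EuclideanSpace ℝ (Fin n))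
    (hfconv : ConvexOn ℝ Set.univ f)
    (hfdiff : ∀ x, HasGradientAt f (f' x) x)
    (hflip : ∀ x y, ‖f' x - f' y‖ ≤ L * ‖x - y‖)
    (g : EuclideanSpace ℝ (Fin n) → EReal)
    (hg_ne_bot : ∀ x, g x ≠ ⊥)
    (hg_proper : ∃ x, g x ≠ ⊤)
    (hg_closed : LowerSemicontinuous g)
    (hg_convex : ∀ x y : EuclideanSpace ℝ (Fin n), ∀ a b : ℝ, 0 ≤ a → 0 ≤ b → a + b = 1 →
      g (a • x + b • y) ≤ (a : EReal) * g x + (b : EReal) * g y)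
    (x : ℕ → EuclideanSpace ℝ (Fin n))
    (hupdate : ∀ k : ℕ, ∀ y : EuclideanSpace ℝ (Fin n),
      g (x (k+1)) + (((L/2) * ‖x (k+1) - (x k - (1/L) • f' (x k))‖^2 : ℝ) : EReal) ≤
        g y + (((L/2) * ‖y - (x k - (1/L) • f' (x k))‖^2 : ℝ) : EReal))
    (xs : EuclideanSpace ℝ (Fin n))
    (hmin : ∀ y, (f xs : EReal) + g xs ≤ (f y : EReal) + g y) :
    ∀ k : ℕ, 1 ≤ k →
      (f (x k) : EReal) + g (x k) ≤
        (f xs : EReal) + g xs + ((L * ‖x 0 - xs‖^2 / (2 * k) : ℝ) : EReal) := by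
  obtain ⟨y₀, hy₀⟩ := hg_proper
  have hLne : L ≠ 0 := ne_of_gt hL
  have hfin : ∀ z : EuclideanSpace ℝ (Fin n), g z ≠ ⊤ → (((g z).toReal : EReal) = g z) :=
    fun z hz => EReal.coe_toReal hz (hg_ne_bot z)
  -- finiteness of iterates
  have hgp : ∀ k : ℕ, g (x (k+1)) ≠ ⊤ := by
    intro k h
    have h1 := hupdate k y₀
    rw [h, EReal.top_add_coe] at h1
    exact absurd (top_le_iff.1 h1) (ne_of_lt (EReal.add_lt_top hy₀ (EReal.coe_ne_top _)))
  have hgs : g xs ≠ ⊤ := by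
    intro h
    have h1 := hmin y₀
    rw [h, EReal.coe_add_top] at h1
    have h2 : (f y₀ : EReal) + g y₀ < ⊤ :=
      EReal.add_lt_top (EReal.coe_ne_top _) hy₀
    exact absurd (top_le_iff.1 h1) (ne_of_lt h2)
  -- three point inequality
  have hthree : ∀ (k : ℕ) (y : EuclideanSpace ℝ (Fin n)), g y ≠ ⊤ →
      (g (x (k+1))).toReal + L/2 * ‖x (k+1) - (x k - (1/L) • f' (x k))‖^2
        + L/2 * ‖x (k+1) - y‖^2
      ≤ (g y).toReal + L/2 * ‖y - (x k - (1/L) • f' (x k))‖^2 := by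
    intro k y hy
    set p := x (k+1) with hp
    set v := x k - (1/L) • f' (x k) with hv
    set A := (g p).toReal with hA
    set B := (g y).toReal with hB
    set c := L/2 * ‖p - y‖^2 with hc
    have hc0 : 0 ≤ c := by rw [hc]; positivity
    have hstep : ∀ t : ℝ, 0 < t → t ≤ 1 →
        A + L/2 * ‖p - v‖^2 + (1-t) * c ≤ B + L/2 * ‖y - v‖^2 := by
      intro t ht0 ht1
      have hgp' : g p = (A : EReal) := (hfin _ (hgp k)).symm
      have hgy' : g y = (B : EReal) := (hfin _ hy).symm
      have h2 := hg_convex p y (1-t) t (by linarith) ht0.le (by ring)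
      rw [hgp', hgy'] at h2
      have h2' : g ((1-t) • p + t • y) ≤ (((1-t) * A + t * B : ℝ) : EReal) := by
        exact_mod_cast h2
      have h1 := hupdate k ((1-t) • p + t • y)
      rw [← hp, ← hv, hgp'] at h1
      have h3 : (A : EReal) + ((L/2 * ‖p - v‖^2 : ℝ) : EReal)
          ≤ (((1-t)*A + t*B : ℝ) : EReal) + ((L/2 * ‖(1-t) • p + t • y - v‖^2 : ℝ) : EReal) :=
        le_trans h1 (add_le_add_left h2' _)
      rw [← EReal.coe_add, ← EReal.coe_add, EReal.coe_le_coe_iff] at h3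
      rw [aux_quad p y v t] at h3
      have h4 : t * (A + L/2 * ‖p - v‖^2 + (1-t) * c) ≤ t * (B + L/2 * ‖y - v‖^2) := by
        rw [hc]; nlinarith [h3]
      exact le_of_mul_le_mul_left h4 ht0
    refine le_of_forall_pos_le_add fun ε hε => ?_
    have htpos : 0 < min 1 (ε/(c+1)) := lt_min one_pos (by positivity)
    have h := hstep (min 1 (ε/(c+1))) htpos (min_le_left _ _)
    have h5 : min 1 (ε/(c+1)) * c ≤ ε := by
      have h6 : min 1 (ε/(c+1)) * c ≤ (ε/(c+1)) * c :=
        mul_le_mul_of_nonneg_right (min_le_right _ _) hc0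
      have h7 : (ε/(c+1)) * c ≤ ε := by
        rw [div_mul_eq_mul_div, div_le_iff₀ (by linarith)]
        nlinarith
      linarith
    linarith
  -- key decrease inequality
  have hkey : ∀ (k : ℕ) (y : EuclideanSpace ℝ (Fin n)), g y ≠ ⊤ →
      f (x (k+1)) + (g (x (k+1))).toReal ≤ f y + (g y).toReal
        + L/2 * (‖x k - y‖^2 - ‖x (k+1) - y‖^2) := by
    intro k y hy
    have h1 := hthree k y hy
    have h2 := aux_descent hL hfdiff hflip (x k) (x (k+1))
    have h3 := aux_convex_grad hfconv hfdiff (x k) y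
    have e1 : L/2 * ‖x (k+1) - (x k - (1/L) • f' (x k))‖^2
        = L/2 * ‖x (k+1) - x k‖^2 + ⟪f' (x k), x (k+1) - x k⟫
          + L/2 * (1/L)^2 * ‖f' (x k)‖^2 := by
      rw [aux_expand _ _ _ hLne]; field_simp
    have e2 : L/2 * ‖y - (x k - (1/L) • f' (x k))‖^2
        = L/2 * ‖y - x k‖^2 + ⟪f' (x k), y - x k⟫
          + L/2 * (1/L)^2 * ‖f' (x k)‖^2 := by
      rw [aux_expand _ _ _ hLne]; field_simp
    rw [e1, e2] at h1
    have e3 : ‖x k - y‖ = ‖y - x k‖ := norm_sub_rev _ _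
    rw [e3]
    linarith
  -- telescoping
  obtain ⟨D, hD⟩ : ∃ D : ℕ → ℝ, ∀ k, D k = f (x k) + (g (x k)).toReal :=
    ⟨_, fun _ => rfl⟩
  obtain ⟨S, hS⟩ : ∃ S : ℝ, S = f xs + (g xs).toReal := ⟨_, rfl⟩
  have hkxs : ∀ k : ℕ, D (k+1) ≤ S + L/2 * (‖x k - xs‖^2 - ‖x (k+1) - xs‖^2) := by
    intro k
    rw [hD, hS]
    exact hkey k xs hgs
  have hdec : ∀ k : ℕ, D (k+1+1) ≤ D (k+1) := by
    intro k
    have h := hkey (k+1) (x (k+1)) (hgp k)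
    have hz : ‖x (k+1) - x (k+1)‖ = 0 := by simp
    rw [hz] at h
    rw [hD, hD]
    nlinarith [h, mul_nonneg (by linarith : (0:ℝ) ≤ L/2) (sq_nonneg ‖x (k+1+1) - x (k+1)‖)]
  have hmono : ∀ i k : ℕ, 1 ≤ i → i ≤ k → D k ≤ D i := by
    intro i k hi hik
    induction k, hik using Nat.le_induction with
    | base => exact le_refl _
    | succ m hm ih =>
      obtain ⟨j, rfl⟩ : ∃ j, m = j + 1 := ⟨m - 1, (Nat.succ_pred_eq_of_pos (le_trans hi hm)).symm⟩
      exact le_trans (hdec j) ih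
  have hsum : ∀ k : ℕ, (∑ i ∈ Finset.range k, (D (i+1) - S))
      ≤ L/2 * ‖x 0 - xs‖^2 - L/2 * ‖x k - xs‖^2 := by
    intro k
    induction k with
    | zero => simp
    | succ m ih =>
      rw [Finset.sum_range_succ]
      have h := hkxs m
      linarith
  intro k hk
  obtain ⟨j, rfl⟩ : ∃ j, k = j + 1 := ⟨k - 1, (Nat.succ_pred_eq_of_pos hk).symm⟩
  have hsum2 : ((j:ℝ)+1) * (D (j+1) - S) ≤ L/2 * ‖x 0 - xs‖^2 := by
    have hterm : ∀ i ∈ Finset.range (j+1), D (j+1) - S ≤ D (i+1) - S := by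
      intro i hi
      have h := hmono (i+1) (j+1) (Nat.succ_le_succ (Nat.zero_le _)) (Finset.mem_range.1 hi)
      linarith
    have h1 := Finset.sum_le_sum hterm
    rw [Finset.sum_const, Finset.card_range, nsmul_eq_mul] at h1
    have h2 := hsum (j+1)
    have h3 : 0 ≤ L/2 * ‖x (j+1) - xs‖^2 := by positivity
    push_cast at h1
    linarith
  have hjpos : (0:ℝ) < ((j+1 : ℕ):ℝ) := by exact_mod_cast Nat.succ_pos j
  have hreal : D (j+1) ≤ S + L * ‖x 0 - xs‖^2 / (2 * ((j+1:ℕ):ℝ)) := by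
    have hdiv : D (j+1) - S ≤ L * ‖x 0 - xs‖^2 / (2 * ((j+1:ℕ):ℝ)) := by
      rw [le_div_iff₀ (by linarith)]
      push_cast
      nlinarith [hsum2]
    linarith
  rw [hD, hS] at hreal
  rw [← hfin _ (hgp j), ← hfin _ hgs, ← EReal.coe_add, ← EReal.coe_add, ← EReal.coe_add,
    EReal.coe_le_coe_iff]
  exact hreal
end
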